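/- If C and D are disjoint subsets of R^d, C is the convex hull of finitely many points, U is a nonempty convex open set disjoint from C, and {U_1,...,U_{d+1}} is a sunflower of convex open sets with center U such that each U_i contains one of the points spanning C, then there exists a hyperplane intersecting every U_i but not U. -/

import Mathlib

/-- The separation step of Corollary 2.2: if `{U 0, …, U d}` is a sunflower of convex open
sets in `ℝ^d` whose (nonempty, convex, open) center `⋂ k, U k` is disjoint from
`C = conv {p 0, …, p d}` where `p i ∈ U i`, then there is a hyperplane intersecting every
`U i` but not the center. -/
theorem sunflower_separating_hyperplane (d : ℕ)
    (U : Fin (d + 1) → Set (EuclideanSpace ℝ (Fin d)))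
    (hconv : ∀ i, Convex ℝ (U i)) (hopen : ∀ i, IsOpen (U i))
    (hcenter : (⋂ k, U k).Nonempty)
    (hsun : ∀ i j, i ≠ j → U i ∩ U j = ⋂ k, U k)
    (p : Fin (d + 1) → EuclideanSpace ℝ (Fin d)) (hp : ∀ i, p i ∈ U i)
    (hdisj : Disjoint (convexHull ℝ (Set.range p)) (⋂ k, U k)) :
    ∃ (a : EuclideanSpace ℝ (Fin d)) (c : ℝ), a ≠ 0 ∧
      (∀ i, ({x : EuclideanSpace ℝ (Fin d) | inner ℝ a x = c} ∩ U i).Nonempty) ∧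
      ({x : EuclideanSpace ℝ (Fin d) | inner ℝ a x = c} ∩ ⋂ k, U k) = ∅ := by
  set W : Set (EuclideanSpace ℝ (Fin d)) := ⋂ k, U k with hW
  have hWopen : IsOpen W := isOpen_iInter_of_finite fun i => hopen i
  have hWconv : Convex ℝ W := convex_iInter fun i => hconv i
  obtain ⟨f, u, hfW, hfC⟩ := geometric_hahn_banach_open hWconv hWopen
    (convex_convexHull ℝ (Set.range p)) hdisj.symm
  have hfne : f ≠ 0 := by
    intro h
    obtain ⟨w, hw⟩ := hcenter
    have h1 : (0 : ℝ) < u := by simpa [h] using hfW w hw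
    have h2 : u ≤ 0 := by
      simpa [h] using hfC (p 0) (subset_convexHull ℝ _ ⟨0, rfl⟩)
    linarith
  set a := (InnerProductSpace.toDual ℝ (EuclideanSpace ℝ (Fin d))).symm f with ha
  have hinner : ∀ x, (inner ℝ a x : ℝ) = f x := fun x => by
    simp [ha, ← InnerProductSpace.toDual_apply_apply]
  refine ⟨a, u, ?_, ?_, ?_⟩
  · intro h
    apply hfne
    ext x
    have := hinner x
    rw [h, inner_zero_left] at this
    simp [← this]
  · intro i
    obtain ⟨w, hw⟩ := hcenter
    have hwUi : w ∈ U i := Set.mem_iInter.mp hw i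
    have hfw : f w < u := hfW w hw
    have hfp : u ≤ f (p i) := hfC (p i) (subset_convexHull ℝ _ ⟨i, rfl⟩)
    set g : ℝ → ℝ := fun t => f ((1 - t) • w + t • p i) with hg
    have hgc : Continuous g := by
      apply f.continuous.comp
      continuity
    have h0 : g 0 = f w := by simp [hg]
    have h1 : g 1 = f (p i) := by simp [hg]
    have : u ∈ Set.Icc (g 0) (g 1) := by
      rw [h0, h1]; exact ⟨hfw.le, hfp⟩
    obtain ⟨t, ht, hgt⟩ := intermediate_value_Icc (by norm_num : (0:ℝ) ≤ 1)
      (hgc.continuousOn) this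
    refine ⟨(1 - t) • w + t • p i, ?_, ?_⟩
    · simpa [hinner, hg] using hgt
    · exact (hconv i) hwUi (hp i) (by linarith [ht.2]) ht.1 (by ring)
  · ext x
    simp only [Set.mem_inter_iff, Set.mem_setOf_eq, Set.mem_empty_iff_false, iff_false]
    rintro ⟨hx, hxW⟩
    have := hfW x hxW
    rw [← hinner x, hx] at this
    exact lt_irrefl _ this
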